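/- Let S be a left cancellative monoid. For s ∈ S let λ_s be the bounded operator (isometry) on the complex Hilbert space ℓ²(S) with λ_s δ_t = δ_{st}; for X ⊆ S let 1_X be the orthogonal projection on ℓ²(S) with 1_X δ_s = δ_s for s ∈ X and 1_X δ_s = 0 otherwise; let C*_r(S) be the closed *-subalgebra of bounded operators on ℓ²(S) generated by {λ_s : s ∈ S}; and let I be the smallest closed two-sided ideal of C*_r(S) containing all projections ∏_{i=1}^m (1_X − 1_{X_i}) = 1_{X ∖ (X_1 ∪ ⋯ ∪ X_m)}, where X ∈ J(S), m ≥ 1, and {X_1,…,X_m} is a foundation set for X (these projections lie in C*_r(S)). Then for every nonempty constructible right ideal A ∈ J(S), the projection 1_A does not belong to I; in particular I is a proper ideal of C*_r(S). -/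

import Mathlib

open scoped Classical

namespace SgC

variable {M : Type*}

/-- Composition of partial maps (`g` after `f`). -/
def pcomp (g f : M → Option M) : M → Option M := fun s => (f s).bind g

/-- The canonical partial inverse of a partial map (the genuine inverse when the map
is injective on its domain, as is the case for all maps in the left inverse hull of a
left cancellative monoid). -/
noncomputable def pinv (f : M → Option M) : M → Option M :=
  fun t => if h : ∃ s, f s = some t then some h.choose else none

/-- Left translation `t ↦ s * t` as an everywhere-defined partial map. -/
def ptransl [Mul M] (s : M) : M → Option M := fun t => some (s * t)

/-- The identity partial map. -/
def pid : M → Option M := fun s => some s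

/-- The block `q⁻¹ ∘ p`: first multiply on the left by `p`, then remove `q` on the left. -/
noncomputable def pblock [Mul M] (p : M × M) : M → Option M :=
  pcomp (pinv (ptransl p.2)) (ptransl p.1)

/-- Membership in the left inverse hull `I_ℓ(M)`: `h` is of the form
`s₂ₙ⁻¹ s₂ₙ₋₁ ⋯ s₂⁻¹ s₁` for some `n ≥ 1` and `sᵢ ∈ M` (the list records the pairs
`(s₁,s₂), (s₃,s₄), …`, applied left to right). -/
def InInvHull [Mul M] (h : M → Option M) : Prop :=
  ∃ l : List (M × M), l ≠ [] ∧
    h = l.foldl (fun acc p => pcomp (pblock p) acc) pid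

/-- Membership in the inverse hull generated by translations by elements of `σ` only
(used for canonical copies of `I_ℓ(S)` inside partial maps of a larger monoid). -/
def InInvHullOn [Mul M] (σ : Set M) (h : M → Option M) : Prop :=
  ∃ l : List (M × M), l ≠ [] ∧ (∀ p ∈ l, p.1 ∈ σ ∧ p.2 ∈ σ) ∧
    h = l.foldl (fun acc p => pcomp (pblock p) acc) pid

/-- Domain of a partial map. -/
def pdom (h : M → Option M) : Set M := {s | h s ≠ none}

/-- `h` fixes the set `Y` pointwise (in particular `Y ⊆ dom h`). -/
def PFixes (h : M → Option M) (Y : Set M) : Prop := ∀ s ∈ Y, h s = some s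

/-- Preimage of a set under a partial map. -/
def ppre (h : M → Option M) (X : Set M) : Set M := {s | ∃ x ∈ X, h s = some x}

/-- Constructible right ideals: domains of elements of the left inverse hull. -/
def IsConstructible [Mul M] (X : Set M) : Prop := ∃ h, InInvHull h ∧ X = pdom h

/-- Membership in `J̄(S)`: sets of the form `X₀` or `X₀ ∖ (X₁ ∪ ⋯ ∪ Xₘ)` with all
`Xᵢ` constructible. -/
def IsConstructibleBar [Mul M] (X : Set M) : Prop :=
  ∃ (X₀ : Set M) (m : ℕ) (Xi : Fin m → Set M),
    IsConstructible X₀ ∧ (∀ i, IsConstructible (Xi i)) ∧ X = X₀ \ ⋃ i, Xi i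

/-- `Xi` is a foundation family for `X`: each `Xi i ⊆ X` and every nonempty
constructible right ideal contained in `X` intersects some `Xi i`. -/
def IsFoundation [Mul M] (X : Set M) {ι : Type*} (Xi : ι → Set M) : Prop :=
  (∀ i, Xi i ⊆ X) ∧
  ∀ Y : Set M, IsConstructible Y → Y.Nonempty → Y ⊆ X → ∃ i, (Y ∩ Xi i).Nonempty

/-- Strong C*-regularity. -/
def StronglyRegular (M : Type*) [Monoid M] : Prop :=
  ∀ (n : ℕ) (h : Fin n → M → Option M), (∀ k, InInvHull (h k)) →
  ∀ (m : ℕ) (X : Set M) (Xi : Fin m → Set M),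
    IsConstructible X → (∀ i, IsConstructible (Xi i)) →
    (X \ ⋃ i, Xi i).Nonempty →
    (X \ ⋃ i, Xi i) ⊆ ⋃ k, {s | h k s = some s} →
    ∃ (l : ℕ) (Y : Fin l → Set M) (kk : Fin l → Fin n),
      (∀ j, IsConstructible (Y j)) ∧
      (X \ ⋃ i, Xi i) ⊆ ⋃ j, Y j ∧
      ∀ j, PFixes (h (kk j)) (Y j)

/-- C*-regularity. -/
def Regular (M : Type*) [Monoid M] : Prop :=
  ∀ (n : ℕ) (h : Fin n → M → Option M), (∀ k, InInvHull (h k)) →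
  ∀ X : Set M, IsConstructibleBar X → X.Nonempty →
    X ⊆ ⋃ k, {s | h k s = some s} →
    ∃ (l : ℕ) (Y : Fin l → Set M) (kk : Fin l → Fin n),
      (∀ j, IsConstructibleBar (Y j)) ∧ X ⊆ ⋃ j, Y j ∧
      ∀ j, PFixes (h (kk j)) (Y j)

/-- Strong C*-regularity on the boundary. -/
def StronglyRegularOnBoundary (M : Type*) [Monoid M] : Prop :=
  ∀ (n : ℕ) (h : Fin n → M → Option M), (∀ k, InInvHull (h k)) →
  ∀ (m : ℕ) (X : Set M) (Xi : Fin m → Set M),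
    IsConstructible X → (∀ i, IsConstructible (Xi i)) → (∀ i, Xi i ⊆ X) →
    (X \ ⋃ i, Xi i).Nonempty →
    (X \ ⋃ i, Xi i) ⊆ ⋃ k, {s | h k s = some s} →
    ∃ (l : ℕ) (Y : Fin l → Set M) (kk : Fin l → Fin n),
      (∀ j, IsConstructible (Y j)) ∧ (∀ j, PFixes (h (kk j)) (Y j)) ∧
      IsFoundation X (Sum.elim Xi Y)

/-- C*-regularity on the boundary. -/
def RegularOnBoundary (M : Type*) [Monoid M] : Prop :=
  ∀ (n : ℕ) (h : Fin n → M → Option M), (∀ k, InInvHull (h k)) →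
  ∀ (m : ℕ) (X : Set M) (Xi : Fin m → Set M),
    IsConstructible X → (∀ i, IsConstructible (Xi i)) → (∀ i, Xi i ⊆ X) →
    (X \ ⋃ i, Xi i).Nonempty →
    (X \ ⋃ i, Xi i) ⊆ ⋃ k, {s | h k s = some s} →
    ∃ (l : ℕ) (Y : Fin l → Set M) (kk : Fin l → Fin n),
      (∀ j, IsConstructibleBar (Y j)) ∧ (∀ j, PFixes (h (kk j)) (Y j)) ∧
      IsFoundation X (Sum.elim Xi Y)

/-- The type of constructible right ideals `J(M)`. -/
def CIdeal (M : Type*) [Mul M] : Type _ := {X : Set M // IsConstructible X}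

/-- The character space `{0,1}^{J(M)}` with the topology of pointwise convergence. -/
abbrev CharSpace (M : Type*) [Mul M] : Type _ := CIdeal M → Bool

/-- The principal character `χ_s`. -/
noncomputable def princhar [Mul M] (s : M) : CharSpace M :=
  fun X => decide (s ∈ X.1)

/-- `Ω(M)`: the closure of the set of principal characters. -/
noncomputable def Omega (M : Type*) [Mul M] : Set (CharSpace M) :=
  closure (Set.range (princhar : M → CharSpace M))

/-- Filters on `J(M)`: nonempty collections of nonempty constructible ideals closed
under intersections and enlargements within `J(M)`. -/
def IsFilterOn [Mul M] (F : Set (CIdeal M)) : Prop :=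
  F.Nonempty ∧ (∀ X ∈ F, (X.1 : Set M).Nonempty) ∧
  (∀ X ∈ F, ∀ Y ∈ F, ∀ Z : CIdeal M, Z.1 = X.1 ∩ Y.1 → Z ∈ F) ∧
  (∀ X ∈ F, ∀ Y : CIdeal M, X.1 ⊆ Y.1 → Y ∈ F)

/-- Nonzero multiplicative `{0,1}`-valued maps on `J(M)`. -/
def IsChar [Mul M] (χ : CharSpace M) : Prop :=
  (∃ X, χ X = true) ∧
  ∀ X Y Z : CIdeal M, Z.1 = X.1 ∩ Y.1 → χ Z = (χ X && χ Y)

/-- Maximal characters: characters whose associated filter is maximal among filters. -/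
def IsMaximalChar [Mul M] (χ : CharSpace M) : Prop :=
  IsChar χ ∧ IsFilterOn {X | χ X = true} ∧
  ∀ G : Set (CIdeal M), IsFilterOn G → {X | χ X = true} ⊆ G → G = {X | χ X = true}

/-- The set of maximal characters `Ω_max(M)`. -/
def OmegaMax (M : Type*) [Mul M] : Set (CharSpace M) := {χ | IsMaximalChar χ}

/-- The boundary `∂Ω(M)`: the closure of the set of maximal characters. -/
noncomputable def BoundaryOmega (M : Type*) [Mul M] : Set (CharSpace M) :=
  closure (OmegaMax M)


/-! ### partial map lemmas -/

/-- partial injectivity -/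
def PInj (f : M → Option M) : Prop := ∀ ⦃s t u : M⦄, f s = some u → f t = some u → s = t


theorem pinv_some {f : M → Option M} {t s : M} (h : pinv f t = some s) : f s = some t := by
  unfold pinv at h
  split_ifs at h with hex
  · have hc := hex.choose_spec
    have : hex.choose = s := Option.some.inj h
    rwa [this] at hc

theorem pinv_eq_some {f : M → Option M} (hf : PInj f) {s t : M} (h : f s = some t) :
    pinv f t = some s := by
  have hex : ∃ u, f u = some t := ⟨s, h⟩
  unfold pinv
  rw [dif_pos hex]
  exact congrArg some (hf hex.choose_spec h)

theorem pinv_isSome {f : M → Option M} {t : M} (h : ∃ s, f s = some t) :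
    ∃ s, pinv f t = some s := by
  unfold pinv; rw [dif_pos h]; exact ⟨_, rfl⟩

theorem pinv_none {f : M → Option M} {t : M} (h : ¬ ∃ s, f s = some t) :
    pinv f t = none := by unfold pinv; rw [dif_neg h]

theorem pinj_ptransl [Mul M] [IsLeftCancelMul M] (s : M) : PInj (ptransl s) := by
  intro a b u ha hb
  have ha' : s * a = u := Option.some.inj ha
  have hb' : s * b = u := Option.some.inj hb
  exact mul_left_cancel (ha'.trans hb'.symm)

theorem pinj_pinv (f : M → Option M) : PInj (pinv f) := by
  intro a b u ha hb
  exact Option.some.inj ((pinv_some ha).symm.trans (pinv_some hb))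

theorem pinj_pcomp {g f : M → Option M} (hg : PInj g) (hf : PInj f) : PInj (pcomp g f) := by
  intro a b u ha hb
  unfold pcomp at ha hb
  rcases hfa : f a with _ | x <;> rw [hfa] at ha
  · exact absurd ha (by simp)
  rcases hfb : f b with _ | y <;> rw [hfb] at hb
  · exact absurd hb (by simp)
  rw [Option.bind_some] at ha hb
  have hxy : x = y := hg ha hb
  rw [← hxy] at hfb
  exact hf hfa hfb

theorem pinj_pblock [Mul M] [IsLeftCancelMul M] (p : M × M) : PInj (pblock p) :=
  pinj_pcomp (pinj_pinv _) (pinj_ptransl _)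

theorem pcomp_assoc (h g f : M → Option M) :
    pcomp h (pcomp g f) = pcomp (pcomp h g) f := by
  funext s
  show ((f s).bind g).bind h = (f s).bind (fun x => (g x).bind h)
  exact Option.bind_assoc _ _ _

@[simp] theorem pcomp_pid_right (g : M → Option M) : pcomp g pid = g := by
  funext s; simp [pcomp, pid]

@[simp] theorem pcomp_pid_left (f : M → Option M) : pcomp pid f = f := by
  funext s; unfold pcomp pid; cases f s <;> simp

/-- abbreviation for the fold in `InInvHull` -/
noncomputable def pfold [Mul M] (l : List (M × M)) : M → Option M :=
  l.foldl (fun acc p => pcomp (pblock p) acc) pid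

theorem pfold_eq [Mul M] (l : List (M × M)) (a : M → Option M) :
    l.foldl (fun acc p => pcomp (pblock p) acc) a = pcomp (pfold l) a := by
  induction l generalizing a with
  | nil => simp [pfold]
  | cons p l ih =>
      show List.foldl _ (pcomp (pblock p) a) l = pcomp (pfold (p :: l)) a
      have h2 : pfold (p :: l) = pcomp (pfold l) (pblock p) := by
        show List.foldl _ (pcomp (pblock p) pid) l = _
        rw [pcomp_pid_right, ih]
      rw [ih, h2, ← pcomp_assoc]

theorem pfold_nil [Mul M] : pfold ([] : List (M × M)) = pid := rfl

theorem pfold_cons [Mul M] (p : M × M) (l : List (M × M)) :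
    pfold (p :: l) = pcomp (pfold l) (pblock p) := by
  show List.foldl _ (pcomp (pblock p) pid) l = _
  rw [pcomp_pid_right, pfold_eq]

theorem pfold_append [Mul M] (l₁ l₂ : List (M × M)) :
    pfold (l₁ ++ l₂) = pcomp (pfold l₂) (pfold l₁) := by
  unfold pfold
  rw [List.foldl_append, pfold_eq]
  rfl

theorem pfold_singleton [Mul M] (p : M × M) : pfold [p] = pblock p := by
  show pcomp (pblock p) pid = _; simp

theorem pinj_pfold [Mul M] [IsLeftCancelMul M] (l : List (M × M)) : PInj (pfold l) := by
  induction l with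
  | nil =>
      intro a b u ha hb
      have ha' : a = u := Option.some.inj ha
      have hb' : b = u := Option.some.inj hb
      rw [ha', hb']
  | cons p l ih => rw [pfold_cons]; exact pinj_pcomp ih (pinj_pblock p)

theorem InInvHull.pinj [Mul M] [IsLeftCancelMul M] {f : M → Option M} (h : InInvHull f) :
    PInj f := by
  obtain ⟨l, -, rfl⟩ := h
  exact pinj_pfold l

theorem InInvHull.pcomp' [Mul M] {g f : M → Option M} (hg : InInvHull g) (hf : InInvHull f) :
    InInvHull (pcomp g f) := by
  obtain ⟨lg, hlg, rfl⟩ := hg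
  obtain ⟨lf, hlf, rfl⟩ := hf
  exact ⟨lf ++ lg, by simp [hlf], (pfold_append lf lg).symm⟩


theorem pinv_pid : pinv (pid : M → Option M) = pid := by
  funext t
  have : (pid : M → Option M) t = some t := rfl
  exact pinv_eq_some (f := (pid : M → Option M))
    (fun a b u ha hb => (Option.some.inj ha).trans (Option.some.inj hb).symm) this

theorem pinv_pinv {f : M → Option M} (hf : PInj f) : pinv (pinv f) = f := by
  funext s
  rcases hfs : f s with _ | t
  · by_cases hex : ∃ t, pinv f t = some s
    · obtain ⟨t, ht⟩ := hex
      have := pinv_some ht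
      rw [hfs] at this; exact absurd this (by simp)
    · rw [pinv_none hex]
  · exact pinv_eq_some (pinj_pinv f) (pinv_eq_some hf hfs)

theorem pinv_pcomp {g f : M → Option M} (hg : PInj g) (hf : PInj f) :
    pinv (pcomp g f) = pcomp (pinv f) (pinv g) := by
  funext t
  rcases hc : pcomp (pinv f) (pinv g) t with _ | s
  · -- show LHS none
    refine pinv_none ?_
    rintro ⟨s, hs⟩
    unfold pcomp at hs
    rcases hfs : f s with _ | u <;> rw [hfs] at hs
    · exact absurd hs (by simp)
    rw [Option.bind_some] at hs
    have h1 : pinv g t = some u := pinv_eq_some hg hs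
    have h2 : pinv f u = some s := pinv_eq_some hf hfs
    unfold pcomp at hc
    rw [h1, Option.bind_some, h2] at hc
    exact absurd hc (by simp)
  · -- RHS = some s, show LHS = some s
    unfold pcomp at hc
    rcases hgt : pinv g t with _ | u <;> rw [hgt] at hc
    · exact absurd hc (by simp)
    rw [Option.bind_some] at hc
    have h1 : g u = some t := pinv_some hgt
    have h2 : f s = some u := pinv_some hc
    refine pinv_eq_some (pinj_pcomp hg hf) ?_
    unfold pcomp
    rw [h2, Option.bind_some, h1]

theorem ptransl_one [MulOneClass M] : ptransl (1 : M) = pid := by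
  funext s; simp [ptransl, pid]

theorem pblock_fst [MulOneClass M] (s : M) : pblock (s, (1:M)) = ptransl s := by
  show pcomp (pinv (ptransl (1:M))) (ptransl s) = _
  rw [ptransl_one, pinv_pid, pcomp_pid_left]

theorem pblock_snd [MulOneClass M] (s : M) : pblock ((1:M), s) = pinv (ptransl s) := by
  show pcomp (pinv (ptransl s)) (ptransl (1:M)) = _
  rw [ptransl_one, pcomp_pid_right]

theorem InInvHull.ptransl' [MulOneClass M] (s : M) : InInvHull (ptransl s) :=
  ⟨[(s, 1)], by simp, by
    show ptransl s = pfold [(s, 1)]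
    rw [pfold_singleton, pblock_fst]⟩

theorem InInvHull.pinv_ptransl [MulOneClass M] (s : M) : InInvHull (pinv (ptransl s)) :=
  ⟨[(1, s)], by simp, by
    show pinv (ptransl s) = pfold [(1, s)]
    rw [pfold_singleton, pblock_snd]⟩

theorem InInvHull.pid' [MulOneClass M] : InInvHull (pid : M → Option M) :=
  ⟨[(1, 1)], by simp, by
    show pid = pfold [(1, 1)]
    rw [pfold_singleton, pblock_fst, ptransl_one]⟩

theorem pinv_pblock [Monoid M] [IsLeftCancelMul M] (p : M × M) :
    pinv (pblock p) = pblock (p.2, p.1) := by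
  show pinv (pcomp (pinv (ptransl p.2)) (ptransl p.1)) = _
  rw [pinv_pcomp (pinj_pinv _) (pinj_ptransl _), pinv_pinv (pinj_ptransl p.2)]
  rfl

theorem pinv_pfold [Monoid M] [IsLeftCancelMul M] (l : List (M × M)) :
    pinv (pfold l) = pfold (l.reverse.map Prod.swap) := by
  induction l with
  | nil => simp [pfold_nil, pinv_pid]
  | cons p l ih =>
      rw [pfold_cons, pinv_pcomp (pinj_pfold l) (pinj_pblock p), ih, pinv_pblock]
      have : (p :: l).reverse.map Prod.swap = (l.reverse.map Prod.swap) ++ [p.swap] := by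
        simp
      rw [this, pfold_append, pfold_singleton]
      rfl

theorem InInvHull.pinv' [Monoid M] [IsLeftCancelMul M] {f : M → Option M} (h : InInvHull f) :
    InInvHull (pinv f) := by
  obtain ⟨l, hl, rfl⟩ := h
  refine ⟨l.reverse.map Prod.swap, by simpa using hl, ?_⟩
  show pinv (pfold l) = pfold (l.reverse.map Prod.swap)
  exact pinv_pfold l

/-! ### constructible set lemmas -/

/-- the idempotent `h⁻¹ h` : identity on `pdom h` -/
noncomputable def pidem (h : M → Option M) : M → Option M := pcomp (pinv h) h

theorem pidem_apply_mem {h : M → Option M} (hinj : PInj h) {s : M} (hs : s ∈ pdom h) :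
    pidem h s = some s := by
  rcases hhs : h s with _ | t
  · exact absurd hhs hs
  · show (h s).bind (pinv h) = some s
    rw [hhs, Option.bind_some, pinv_eq_some hinj hhs]

theorem pidem_apply_not_mem {h : M → Option M} {s : M} (hs : s ∉ pdom h) :
    pidem h s = none := by
  have : h s = none := by
    rcases hhs : h s with _ | t
    · rfl
    · exfalso
      exact hs (show h s ≠ none by rw [hhs]; simp)
  show (h s).bind (pinv h) = none
  rw [this]; rfl

theorem mem_pdom {h : M → Option M} {s : M} : s ∈ pdom h ↔ ∃ t, h s = some t := by
  constructor
  · intro hs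
    rcases hhs : h s with _ | t
    · exact absurd hhs hs
    · exact ⟨t, rfl⟩
  · rintro ⟨t, ht⟩ c
    rw [ht] at c; exact absurd c (by simp)

theorem InInvHull.pidem' [Monoid M] [IsLeftCancelMul M] {h : M → Option M} (hh : InInvHull h) :
    InInvHull (pidem h) := hh.pinv'.pcomp' hh

theorem pdom_pidem {h : M → Option M} (hinj : PInj h) : pdom (pidem h) = pdom h := by
  ext s
  constructor
  · intro hs
    by_contra hsd
    exact hs (pidem_apply_not_mem hsd)
  · intro hs
    show pidem h s ≠ none
    rw [pidem_apply_mem hinj hs]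
    simp

theorem IsConstructible.inter [Monoid M] [IsLeftCancelMul M] {X Y : Set M}
    (hX : IsConstructible X) (hY : IsConstructible Y) : IsConstructible (X ∩ Y) := by
  obtain ⟨h, hh, rfl⟩ := hX
  obtain ⟨k, hk, rfl⟩ := hY
  refine ⟨pcomp (pidem h) (pidem k), (hh.pidem').pcomp' (hk.pidem'), ?_⟩
  ext s
  constructor
  · rintro ⟨hsX, hsY⟩
    show (pidem k s).bind (pidem h) ≠ none
    rw [pidem_apply_mem hk.pinj hsY, Option.bind_some, pidem_apply_mem hh.pinj hsX]
    simp
  · intro hs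
    show s ∈ pdom h ∧ s ∈ pdom k
    by_cases hsY : s ∈ pdom k
    · by_cases hsX : s ∈ pdom h
      · exact ⟨hsX, hsY⟩
      · exfalso
        apply hs
        show (pidem k s).bind (pidem h) = none
        rw [pidem_apply_mem hk.pinj hsY, Option.bind_some, pidem_apply_not_mem hsX]
    · exfalso
      apply hs
      show (pidem k s).bind (pidem h) = none
      rw [pidem_apply_not_mem hsY]
      rfl

theorem IsConstructible.ppre' [Monoid M] [IsLeftCancelMul M] {g : M → Option M} {X : Set M}
    (hg : InInvHull g) (hX : IsConstructible X) : IsConstructible (ppre g X) := by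
  obtain ⟨k, hk, rfl⟩ := hX
  refine ⟨pcomp (pidem k) g, (hk.pidem').pcomp' hg, ?_⟩
  ext s
  constructor
  · rintro ⟨x, hx, hgs⟩
    show (g s).bind (pidem k) ≠ none
    rw [hgs, Option.bind_some, pidem_apply_mem hk.pinj hx]
    simp
  · intro hs
    rcases hgs : g s with _ | x
    · exfalso; apply hs; show (g s).bind (pidem k) = none; rw [hgs]; rfl
    · refine ⟨x, ?_, hgs⟩
      by_cases hx : x ∈ pdom k
      · exact hx
      · exfalso; apply hs
        show (g s).bind (pidem k) = none
        rw [hgs, Option.bind_some, pidem_apply_not_mem hx]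

/-- image of a set under a partial map -/
def pim (g : M → Option M) (Y : Set M) : Set M := {t | ∃ y ∈ Y, g y = some t}

theorem pim_eq_ppre_pinv {g : M → Option M} (hg : PInj g) (Y : Set M) :
    pim g Y = ppre (pinv g) Y := by
  ext t
  constructor
  · rintro ⟨y, hy, hgy⟩
    exact ⟨y, hy, pinv_eq_some hg hgy⟩
  · rintro ⟨y, hy, hgy⟩
    exact ⟨y, hy, pinv_some hgy⟩

theorem IsConstructible.pim' [Monoid M] [IsLeftCancelMul M] {g : M → Option M} {Y : Set M}
    (hg : InInvHull g) (hY : IsConstructible Y) : IsConstructible (pim g Y) := by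
  rw [pim_eq_ppre_pinv hg.pinj]
  exact IsConstructible.ppre' hg.pinv' hY

/-! ### the key shrinking lemma -/

theorem shrink [Monoid M] [IsLeftCancelMul M] {m : ℕ} {X : Set M} {Xi : Fin m → Set M}
    (hX : IsConstructible X) (hXi : ∀ i, IsConstructible (Xi i))
    (hF : IsFoundation X Xi) {g : M → Option M} (hg : InInvHull g)
    {Y : Set M} (hY : IsConstructible Y) (hYne : Y.Nonempty) :
    ∃ Y', IsConstructible Y' ∧ Y'.Nonempty ∧ Y' ⊆ Y ∧
      ∀ s ∈ Y', ∀ t, g s = some t → t ∉ X \ ⋃ i, Xi i := by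
  classical
  by_cases hW : (Y ∩ ppre g X).Nonempty
  · set W := Y ∩ ppre g X with hWdef
    have hWc : IsConstructible W := hY.inter (IsConstructible.ppre' hg hX)
    have hImc : IsConstructible (pim g W) := IsConstructible.pim' hg hWc
    have hImne : (pim g W).Nonempty := by
      obtain ⟨w, hw⟩ := hW
      obtain ⟨x, hx, hgw⟩ := hw.2
      exact ⟨x, w, hw, hgw⟩
    have hImsub : pim g W ⊆ X := by
      rintro t ⟨y, hy, hgy⟩
      obtain ⟨x, hx, hgy'⟩ := hy.2
      rw [hgy] at hgy'
      rw [Option.some.inj hgy']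
      exact hx
    obtain ⟨i, t0, ht0⟩ := hF.2 (pim g W) hImc hImne hImsub
    obtain ⟨y0, hy0, hgy0⟩ := ht0.1
    refine ⟨W ∩ ppre g (Xi i), hWc.inter (IsConstructible.ppre' hg (hXi i)), ?_, ?_, ?_⟩
    · exact ⟨y0, hy0, t0, ht0.2, hgy0⟩
    · exact fun s hs => hs.1.1
    · rintro s ⟨hsW, x, hxXi, hgs⟩ t hgt ⟨htX, htU⟩
      rw [hgs] at hgt
      apply htU
      rw [Option.some.inj hgt] at hxXi
      exact Set.mem_iUnion.mpr ⟨i, hxXi⟩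
  · refine ⟨Y, hY, hYne, le_refl Y, ?_⟩
    rintro s hs t hgt ⟨htX, -⟩
    exact hW ⟨s, hs, t, htX, hgt⟩


/-! ### Analytic part -/

section Analytic

variable [Monoid M] [IsLeftCancelMul M]

local notation "H" => lp (fun _ : M => ℂ) 2
local notation "B" => (lp (fun _ : M => ℂ) 2 →L[ℂ] lp (fun _ : M => ℂ) 2)

/-- standard basis vector -/
noncomputable def dl (s : M) : H := lp.single 2 s (1 : ℂ)

/-- 0 or basis vector -/
noncomputable def opt : Option M → H
  | none => 0
  | some t => dl t

set_option linter.unusedSectionVars false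

theorem dl_apply (u t : M) : (dl u : H) t = if t = u then (1 : ℂ) else 0 := by
  unfold dl
  by_cases h : t = u
  · subst h
    rw [if_pos rfl]
    exact lp.single_apply_self (E := fun _ : M => ℂ) 2 t (1 : ℂ)
  · rw [if_neg h]
    exact lp.single_apply_ne (E := fun _ : M => ℂ) 2 u (1 : ℂ) h

theorem norm_dl (s : M) : ‖(dl s : H)‖ = 1 := by
  have := lp.norm_single (p := 2) (E := fun _ : M => ℂ) (by norm_num) s (1 : ℂ)
  simpa [dl] using this

theorem inner_dl_left (t : M) (x : H) : (inner ℂ (dl t) x : ℂ) = x t := by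
  rw [dl, lp.inner_single_left]
  simp [RCLike.inner_apply]

theorem single_eq_smul_dl (i : M) (c : ℂ) : lp.single 2 i c = c • (dl i : H) := by
  rw [dl, ← lp.single_smul]
  norm_num

theorem hasSum_dl (x : H) : HasSum (fun i : M => (x i) • (dl i : H)) x := by
  have h := lp.hasSum_single (E := fun _ : M => ℂ) (p := 2) (by norm_num) x
  have he : (fun i : M => lp.single 2 i (x i)) = fun i : M => (x i) • (dl i : H) :=
    funext fun i => single_eq_smul_dl i (x i)
  rwa [he] at h


theorem ext_dl {T U : B} (h : ∀ s, T (dl s) = U (dl s)) : T = U := by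
  refine ContinuousLinearMap.ext fun x => ?_
  have hT := (hasSum_dl x).mapL T
  have hU := (hasSum_dl x).mapL U
  have he : (fun i : M => T ((x i) • dl i)) = fun i : M => U ((x i) • dl i) := by
    funext i
    rw [map_smul, map_smul, h i]
  rw [he] at hT
  exact hT.unique hU

variable (lam : M → (lp (fun _ : M => ℂ) 2 →L[ℂ] lp (fun _ : M => ℂ) 2))

/-- `T` acts on basis vectors as the partial map `f`. -/
def RepOp (T : B) (f : M → Option M) : Prop := ∀ s, T (dl s) = opt (f s)

theorem repOp_one : RepOp (1 : B) pid := fun s => rfl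

theorem RepOp.mul {U T : B} {g f : M → Option M} (hU : RepOp U g) (hT : RepOp T f) :
    RepOp (U * T) (pcomp g f) := by
  intro s
  show U (T (dl s)) = opt ((f s).bind g)
  rw [hT s]
  rcases f s with _ | t
  · show U 0 = opt none
    rw [map_zero]; rfl
  · exact hU t

section HL

variable (hlam : ∀ s t : M, lam s (lp.single 2 t (1:ℂ)) = lp.single 2 (s * t) (1:ℂ))
include hlam

theorem repOp_lam (s : M) : RepOp (lam s) (ptransl s) := fun t => hlam s t

theorem lam_apply_coord_some {r u t : M} (hru : r * u = t) (x : H) :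
    (lam r x) t = x u := by
  have hs := (hasSum_dl x).mapL (lam r)
  have hs2 := hs.mapL (innerSL ℂ (dl t : H))
  have he : (fun i : M => (innerSL ℂ (dl t : H)) ((lam r) (x i • dl i)))
      = fun i : M => if i = u then x u else 0 := by
    funext i
    rw [map_smul, show (lam r) (dl i) = dl (r * i) from hlam r i]
    have : (innerSL ℂ (dl t : H)) (dl (r * i)) = (dl (r*i) : H) t := inner_dl_left t _
    rw [map_smul, this, dl_apply]
    by_cases hi : i = u
    · subst hi
      rw [if_pos hru.symm, if_pos rfl]
      simp
    · rw [if_neg hi, if_neg]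
      · simp
      · intro hc
        exact hi (mul_left_cancel ((hc ▸ hru : r * u = r * i)).symm)
  rw [he] at hs2
  have h3 := (hasSum_ite_eq u (x u)).unique hs2
  have h5 : ((innerSL ℂ) (dl t)) ((lam r) x) = (inner ℂ (dl t) ((lam r) x) : ℂ) := rfl
  rw [h5, inner_dl_left] at h3
  exact h3.symm

theorem lam_apply_coord_none {r t : M} (hru : ¬ ∃ u, r * u = t) (x : H) :
    (lam r x) t = 0 := by
  have hs := (hasSum_dl x).mapL (lam r)
  have hs2 := hs.mapL (innerSL ℂ (dl t : H))
  have he : (fun i : M => (innerSL ℂ (dl t : H)) ((lam r) (x i • dl i)))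
      = fun _ : M => (0 : ℂ) := by
    funext i
    rw [map_smul, show (lam r) (dl i) = dl (r * i) from hlam r i]
    have : (innerSL ℂ (dl t : H)) (dl (r * i)) = (dl (r*i) : H) t := inner_dl_left t _
    rw [map_smul, this, dl_apply, if_neg (fun hc => hru ⟨i, hc.symm⟩)]
    simp
  rw [he] at hs2
  have h3 := hasSum_zero.unique hs2
  have h5 : ((innerSL ℂ) (dl t)) ((lam r) x) = (inner ℂ (dl t) ((lam r) x) : ℂ) := rfl
  rw [h5, inner_dl_left] at h3
  exact h3.symm

theorem repOp_star_lam (r : M) : RepOp (star (lam r)) (pinv (ptransl r)) := by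
  intro t
  rcases hc : pinv (ptransl r) t with _ | u
  · have hex : ¬ ∃ u, r * u = t := by
      rintro ⟨u, hu⟩
      obtain ⟨s', hs'⟩ := pinv_isSome (f := ptransl r) ⟨u, congrArg some hu⟩
      rw [hc] at hs'
      exact absurd hs' (by simp)
    show star (lam r) (dl t) = 0
    refine ext_inner_right ℂ (fun v => ?_)
    rw [ContinuousLinearMap.star_eq_adjoint, ContinuousLinearMap.adjoint_inner_left,
      inner_dl_left, lam_apply_coord_none lam hlam hex, inner_zero_left]
  · have h0 : ptransl r u = some t := pinv_some hc
    have hru : r * u = t := Option.some.inj h0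
    show star (lam r) (dl t) = dl u
    refine ext_inner_right ℂ (fun v => ?_)
    rw [ContinuousLinearMap.star_eq_adjoint, ContinuousLinearMap.adjoint_inner_left,
      inner_dl_left, inner_dl_left, lam_apply_coord_some lam hlam hru]

end HL

/-! ### word operators -/

/-- the operator of one block -/
noncomputable def opB (p : M × M) : B := star (lam p.2) * lam p.1

/-- the operator of a word of blocks -/
noncomputable def opW (l : List (M × M)) : B :=
  l.foldl (fun acc q => opB lam q * acc) 1

theorem opW_eq (l : List (M × M)) (a : B) :
    l.foldl (fun acc q => opB lam q * acc) a = opW lam l * a := by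
  induction l generalizing a with
  | nil => show a = 1 * a; rw [one_mul]
  | cons p l ih =>
      show List.foldl _ (opB lam p * a) l = opW lam (p :: l) * a
      have h2 : opW lam (p :: l) = opW lam l * opB lam p := by
        show List.foldl _ (opB lam p * 1) l = _
        rw [mul_one, ih]
      rw [ih, h2, mul_assoc]

theorem opW_nil : opW lam [] = 1 := rfl

theorem opW_cons (p : M × M) (l : List (M × M)) :
    opW lam (p :: l) = opW lam l * opB lam p := by
  show List.foldl _ (opB lam p * 1) l = _
  rw [mul_one, opW_eq]

theorem opW_append (l₁ l₂ : List (M × M)) :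
    opW lam (l₁ ++ l₂) = opW lam l₂ * opW lam l₁ := by
  unfold opW
  rw [List.foldl_append, opW_eq]
  rfl

theorem opW_singleton (p : M × M) : opW lam [p] = opB lam p := by
  show opB lam p * 1 = _
  rw [mul_one]

theorem star_opB (p : M × M) : star (opB lam p) = opB lam p.swap := by
  unfold opB
  rw [star_mul, star_star]
  rfl

theorem star_opW (l : List (M × M)) :
    star (opW lam l) = opW lam (l.reverse.map Prod.swap) := by
  induction l with
  | nil => rw [opW_nil]; simp [opW_nil]
  | cons p l ih =>
      rw [opW_cons, star_mul, star_opB, ih]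
      have : (p :: l).reverse.map Prod.swap = (l.reverse.map Prod.swap) ++ [p.swap] := by simp
      rw [this, opW_append, opW_singleton]

theorem opW_mem_adjoin (l : List (M × M)) :
    opW lam l ∈ StarAlgebra.adjoin ℂ (Set.range lam) := by
  have aux : ∀ (l : List (M × M)) (a : B), a ∈ StarAlgebra.adjoin ℂ (Set.range lam) →
      l.foldl (fun acc q => opB lam q * acc) a ∈ StarAlgebra.adjoin ℂ (Set.range lam) := by
    intro l
    induction l with
    | nil => intro a ha; exact ha
    | cons p l ih =>
        intro a ha
        refine ih _ (mul_mem (mul_mem ?_ ?_) ha)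
        · exact star_mem (StarAlgebra.subset_adjoin ℂ _ ⟨p.2, rfl⟩)
        · exact StarAlgebra.subset_adjoin ℂ _ ⟨p.1, rfl⟩
  exact aux l 1 (one_mem _)

section HL2

variable (hlam : ∀ s t : M, lam s (lp.single 2 t (1:ℂ)) = lp.single 2 (s * t) (1:ℂ))
include hlam

theorem repOp_opB (p : M × M) : RepOp (opB lam p) (pblock p) :=
  (repOp_star_lam lam hlam p.2).mul (repOp_lam lam hlam p.1)

theorem repOp_opW (l : List (M × M)) : RepOp (opW lam l) (pfold l) := by
  induction l with
  | nil => exact repOp_one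
  | cons p l ih =>
      rw [opW_cons, pfold_cons]
      exact RepOp.mul ih (repOp_opB lam hlam p)

theorem repOp_star_opW (l : List (M × M)) : RepOp (star (opW lam l)) (pinv (pfold l)) := by
  rw [star_opW, pinv_pfold]
  exact repOp_opW lam hlam _

end HL2


section PP

variable (P : Set M → (lp (fun _ : M => ℂ) 2 →L[ℂ] lp (fun _ : M => ℂ) 2))

section withP

variable (hlam : ∀ s t : M, lam s (lp.single 2 t (1:ℂ)) = lp.single 2 (s * t) (1:ℂ))
variable (hP : ∀ (X : Set M) (s : M),
      P X (lp.single 2 s 1) = if s ∈ X then lp.single 2 s 1 else 0)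
include hlam hP

theorem P_dl (X : Set M) (s : M) : P X (dl s) = if s ∈ X then dl s else 0 := hP X s

theorem P_mem_adjoin [IsLeftCancelMul M] {X : Set M} (hX : IsConstructible X) :
    P X ∈ StarAlgebra.adjoin ℂ (Set.range lam) := by
  obtain ⟨h, ⟨l, -, rfl⟩, rfl⟩ := hX
  have hrep : RepOp (star (opW lam l) * opW lam l)
      (pcomp (pinv (pfold l)) (pfold l)) :=
    (repOp_star_opW lam hlam l).mul (repOp_opW lam hlam l)
  have hEq : P (pdom (pfold l)) = star (opW lam l) * opW lam l := by
    refine ext_dl fun s => ?_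
    rw [P_dl lam P hlam hP, hrep s]
    by_cases hs : s ∈ pdom (pfold l)
    · rw [if_pos hs]
      show _ = opt (pidem (pfold l) s)
      rw [pidem_apply_mem (pinj_pfold l) hs]
      rfl
    · rw [if_neg hs]
      show _ = opt (pidem (pfold l) s)
      rw [pidem_apply_not_mem hs]
      rfl
  show P (pdom (pfold l)) ∈ _
  rw [hEq]
  exact mul_mem (star_mem (opW_mem_adjoin lam l)) (opW_mem_adjoin lam l)

theorem prodP_dl {m : ℕ} (Xi : Fin m → Set M) (l : List (Fin m)) (s : M) :
    ((l.map (fun i => (1 : B) - P (Xi i))).prod) (dl s)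
      = if (∀ i ∈ l, s ∉ Xi i) then dl s else 0 := by
  induction l with
  | nil =>
      rw [if_pos (by simp)]
      rfl
  | cons i l ih =>
      rw [List.map_cons, List.prod_cons, ContinuousLinearMap.mul_apply, ih]
      by_cases hl : ∀ j ∈ l, s ∉ Xi j
      · rw [if_pos hl]
        by_cases hi : s ∈ Xi i
        · rw [if_neg (by push_neg; exact ⟨i, by simp, hi⟩)]
          rw [ContinuousLinearMap.sub_apply, ContinuousLinearMap.one_apply,
            P_dl lam P hlam hP, if_pos hi, sub_self]
        · have hall : ∀ j ∈ i :: l, s ∉ Xi j := by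
            intro j hj
            rcases List.mem_cons.mp hj with rfl | hj'
            · exact hi
            · exact hl j hj'
          rw [if_pos hall]
          rw [ContinuousLinearMap.sub_apply, ContinuousLinearMap.one_apply,
            P_dl lam P hlam hP, if_neg hi, sub_zero]
      · rw [if_neg hl, map_zero, if_neg]
        push_neg at hl ⊢
        obtain ⟨j, hj, hsj⟩ := hl
        exact ⟨j, by simp [hj], hsj⟩

theorem P_diff_mem_adjoin [IsLeftCancelMul M] {m : ℕ} {X : Set M} {Xi : Fin m → Set M}
    (hX : IsConstructible X) (hXi : ∀ i, IsConstructible (Xi i)) :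
    P (X \ ⋃ i, Xi i) ∈ StarAlgebra.adjoin ℂ (Set.range lam) := by
  have hEq : P (X \ ⋃ i, Xi i)
      = P X * ((List.finRange m).map (fun i => (1 : B) - P (Xi i))).prod := by
    refine ext_dl fun s => ?_
    rw [ContinuousLinearMap.mul_apply, prodP_dl lam P hlam hP, P_dl lam P hlam hP]
    by_cases hU : ∀ i ∈ List.finRange m, s ∉ Xi i
    · rw [if_pos hU, P_dl lam P hlam hP]
      by_cases hX' : s ∈ X
      · rw [if_pos hX', if_pos]
        exact ⟨hX', by intro hc; obtain ⟨_, ⟨i, rfl⟩, hi⟩ := hc; exact hU i (List.mem_finRange i) hi⟩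
      · rw [if_neg hX', if_neg (fun hc => hX' hc.1)]
    · rw [if_neg hU, map_zero, if_neg]
      push_neg at hU
      obtain ⟨i, -, hi⟩ := hU
      exact fun hc => hc.2 (Set.mem_iUnion.mpr ⟨i, hi⟩)
  rw [hEq]
  refine mul_mem (P_mem_adjoin lam P hlam hP hX) ?_
  have : ∀ l : List (Fin m),
      ((l.map (fun i => (1 : B) - P (Xi i))).prod) ∈ StarAlgebra.adjoin ℂ (Set.range lam) := by
    intro l
    induction l with
    | nil => exact one_mem _
    | cons i l ih =>
        rw [List.map_cons, List.prod_cons]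
        exact mul_mem (sub_mem (one_mem _) (P_mem_adjoin lam P hlam hP (hXi i))) ih
  exact this _


end withP

/-- monomials in the generators and their adjoints -/
noncomputable def Wmon : Submonoid (lp (fun _ : M => ℂ) 2 →L[ℂ] lp (fun _ : M => ℂ) 2) :=
  Submonoid.closure (Set.range lam ∪ star (Set.range lam))

/-- generators of the boundary ideal -/
def GenSet : Set (lp (fun _ : M => ℂ) 2 →L[ℂ] lp (fun _ : M => ℂ) 2) :=
  {T | ∃ u ∈ Wmon lam, ∃ v ∈ Wmon lam, ∃ (m : ℕ) (X : Set M) (Xi : Fin m → Set M),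
    1 ≤ m ∧ IsConstructible X ∧ (∀ i, IsConstructible (Xi i)) ∧ IsFoundation X Xi ∧
    T = u * (P (X \ ⋃ i, Xi i)) * v}

section withP2

variable (hlam : ∀ s t : M, lam s (lp.single 2 t (1:ℂ)) = lp.single 2 (s * t) (1:ℂ))
variable (hP : ∀ (X : Set M) (s : M),
      P X (lp.single 2 s 1) = if s ∈ X then lp.single 2 s 1 else 0)

include hlam in
theorem word_rep [IsLeftCancelMul M] {v : B} (hv : v ∈ Wmon lam) :
    ∃ f, InInvHull f ∧ RepOp v f := by
  induction hv using Submonoid.closure_induction with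
  | mem x hx =>
      rcases hx with ⟨r, rfl⟩ | hx
      · exact ⟨ptransl r, InInvHull.ptransl' r, repOp_lam lam hlam r⟩
      · obtain ⟨r, hr⟩ := Set.mem_star.mp hx
        have hx' : x = star (lam r) := by rw [hr, star_star]
        rw [hx']
        exact ⟨pinv (ptransl r), InInvHull.pinv_ptransl r, repOp_star_lam lam hlam r⟩
  | one => exact ⟨pid, InInvHull.pid', repOp_one⟩
  | mul x y hx hy ihx ihy =>
      obtain ⟨f, hf, hrf⟩ := ihx
      obtain ⟨g, hg, hrg⟩ := ihy
      exact ⟨pcomp f g, hf.pcomp' hg, hrf.mul hrg⟩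

theorem word_mem_adjoin {v : B} (hv : v ∈ Wmon lam) :
    v ∈ StarAlgebra.adjoin ℂ (Set.range lam) := by
  induction hv using Submonoid.closure_induction with
  | mem x hx =>
      rcases hx with hx | hx
      · exact StarAlgebra.subset_adjoin ℂ _ hx
      · obtain ⟨r, hr⟩ := Set.mem_star.mp hx
        rw [← star_star x]
        exact star_mem (StarAlgebra.subset_adjoin ℂ _ (by rw [← hr] at *; exact ⟨r, hr⟩))
  | one => exact one_mem _
  | mul x y hx hy ihx ihy => exact mul_mem ihx ihy

theorem adjoin_subset_span {a : B} (ha : a ∈ StarAlgebra.adjoin ℂ (Set.range lam)) :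
    a ∈ Submodule.span ℂ ((Wmon lam : Set B)) := by
  have h1 : a ∈ Subalgebra.toSubmodule (StarAlgebra.adjoin ℂ (Set.range lam)).toSubalgebra := ha
  rw [StarAlgebra.adjoin_eq_span] at h1
  exact h1

theorem gen_mul_left {w g : B} (hw : w ∈ Wmon lam) (hg : g ∈ GenSet lam P) :
    w * g ∈ GenSet lam P := by
  obtain ⟨u, hu, v, hv, m, X, Xi, hm, hX, hXi, hfound, rfl⟩ := hg
  exact ⟨w * u, mul_mem hw hu, v, hv, m, X, Xi, hm, hX, hXi, hfound, by
    simp only [mul_assoc]⟩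

theorem gen_mul_right {w g : B} (hw : w ∈ Wmon lam) (hg : g ∈ GenSet lam P) :
    g * w ∈ GenSet lam P := by
  obtain ⟨u, hu, v, hv, m, X, Xi, hm, hX, hXi, hfound, rfl⟩ := hg
  exact ⟨u, hu, v * w, mul_mem hv hw, m, X, Xi, hm, hX, hXi, hfound, by
    simp only [mul_assoc]⟩

theorem span_mul_left {a x : B} (ha : a ∈ Submodule.span ℂ ((Wmon lam : Set B)))
    (hx : x ∈ Submodule.span ℂ (GenSet lam P)) :
    a * x ∈ Submodule.span ℂ (GenSet lam P) := by
  induction ha using Submodule.span_induction with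
  | mem w hw =>
      induction hx using Submodule.span_induction with
      | mem g hg => exact Submodule.subset_span (gen_mul_left lam P hw hg)
      | zero => rw [mul_zero]; exact zero_mem _
      | add x y _ _ h1 h2 => rw [mul_add]; exact add_mem h1 h2
      | smul c x _ h => rw [mul_smul_comm]; exact Submodule.smul_mem _ _ h
  | zero => rw [zero_mul]; exact zero_mem _
  | add a b _ _ h1 h2 => rw [add_mul]; exact add_mem h1 h2
  | smul c a _ h => rw [smul_mul_assoc]; exact Submodule.smul_mem _ _ h

theorem span_mul_right {a x : B} (ha : a ∈ Submodule.span ℂ ((Wmon lam : Set B)))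
    (hx : x ∈ Submodule.span ℂ (GenSet lam P)) :
    x * a ∈ Submodule.span ℂ (GenSet lam P) := by
  induction ha using Submodule.span_induction with
  | mem w hw =>
      induction hx using Submodule.span_induction with
      | mem g hg => exact Submodule.subset_span (gen_mul_right lam P hw hg)
      | zero => rw [zero_mul]; exact zero_mem _
      | add x y _ _ h1 h2 => rw [add_mul]; exact add_mem h1 h2
      | smul c x _ h => rw [smul_mul_assoc]; exact Submodule.smul_mem _ _ h
  | zero => rw [mul_zero]; exact zero_mem _
  | add a b _ _ h1 h2 => rw [mul_add]; exact add_mem h1 h2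
  | smul c a _ h => rw [mul_smul_comm]; exact Submodule.smul_mem _ _ h

include hlam hP in
theorem span_kills [IsLeftCancelMul M] {z : B}
    (hz : z ∈ Submodule.span ℂ (GenSet lam P)) :
    ∀ Y : Set M, IsConstructible Y → Y.Nonempty →
      ∃ Y', IsConstructible Y' ∧ Y'.Nonempty ∧ Y' ⊆ Y ∧ ∀ s ∈ Y', z (dl s) = 0 := by
  induction hz using Submodule.span_induction with
  | mem T hT =>
      obtain ⟨u, hu, v, hv, m, X, Xi, hm, hX, hXi, hfound, rfl⟩ := hT
      intro Y hYc hYne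
      obtain ⟨f, hfhull, hfrep⟩ := word_rep lam hlam hv
      obtain ⟨Y', hY'c, hY'ne, hY'sub, hY'⟩ := shrink hX hXi hfound hfhull hYc hYne
      refine ⟨Y', hY'c, hY'ne, hY'sub, fun s hs => ?_⟩
      rw [ContinuousLinearMap.mul_apply, hfrep s]
      rcases hfs : f s with _ | t
      · show (u * P (X \ ⋃ i, Xi i)) 0 = 0
        rw [map_zero]
      · show (u * P (X \ ⋃ i, Xi i)) (dl t) = 0
        rw [ContinuousLinearMap.mul_apply, P_dl lam P hlam hP,
          if_neg (hY' s hs t hfs), map_zero]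
  | zero =>
      intro Y hYc hYne
      exact ⟨Y, hYc, hYne, le_refl Y, fun s _ => rfl⟩
  | add x y hx hy ihx ihy =>
      intro Y hYc hYne
      obtain ⟨Y1, h1c, h1ne, h1sub, h1⟩ := ihx Y hYc hYne
      obtain ⟨Y2, h2c, h2ne, h2sub, h2⟩ := ihy Y1 h1c h1ne
      refine ⟨Y2, h2c, h2ne, h2sub.trans h1sub, fun s hs => ?_⟩
      rw [ContinuousLinearMap.add_apply, h1 s (h2sub hs), h2 s hs, add_zero]
  | smul c x hx ih =>
      intro Y hYc hYne
      obtain ⟨Y', hc, hne, hsub, h⟩ := ih Y hYc hYne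
      refine ⟨Y', hc, hne, hsub, fun s hs => ?_⟩
      rw [ContinuousLinearMap.smul_apply, h s hs, smul_zero]

end withP2

end PP


end Analytic


/-- Let `S` be a left cancellative monoid, `λ_s` the isometries of
`ℓ²(S)` with `λ_s δ_t = δ_{st}`, `1_X` the coordinate projections, `C = C*_r(S)` the
closed *-subalgebra of `B(ℓ²(S))` generated by the `λ_s`, and `I` the smallest closed
two-sided ideal of `C` containing the projections `1_{X ∖ (X₁ ∪ ⋯ ∪ Xₘ)}` for all
foundation sets `{X₁, …, Xₘ}` of constructible right ideals `X`.  Then `1_A ∉ I` for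
every nonempty constructible right ideal `A`; in particular `I` is proper.
(Here `I` is realized as the intersection of all closed two-sided ideals of `C`
containing these projections, and `λ_s`, `1_X` are pinned down by their action on the
standard basis vectors `lp.single 2 t 1 = δ_t`, which determines them uniquely.) -/
theorem cstar_stmt4 {M : Type*} [Monoid M] [IsLeftCancelMul M]
    (lam : M → (lp (fun _ : M => ℂ) 2 →L[ℂ] lp (fun _ : M => ℂ) 2))
    (hlam : ∀ s t : M, lam s (lp.single 2 t 1) = lp.single 2 (s * t) 1)
    (P : Set M → (lp (fun _ : M => ℂ) 2 →L[ℂ] lp (fun _ : M => ℂ) 2))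
    (hP : ∀ (X : Set M) (s : M),
      P X (lp.single 2 s 1) = if s ∈ X then lp.single 2 s 1 else 0)
    (C : Set (lp (fun _ : M => ℂ) 2 →L[ℂ] lp (fun _ : M => ℂ) 2))
    (hC : C = closure
      ((StarAlgebra.adjoin ℂ (Set.range lam) :
        StarSubalgebra ℂ (lp (fun _ : M => ℂ) 2 →L[ℂ] lp (fun _ : M => ℂ) 2)) :
        Set (lp (fun _ : M => ℂ) 2 →L[ℂ] lp (fun _ : M => ℂ) 2)))
    (A : Set M) (hA : IsConstructible A) (hAne : A.Nonempty) :
    P A ∉ ⋂₀ {I : Set (lp (fun _ : M => ℂ) 2 →L[ℂ] lp (fun _ : M => ℂ) 2) |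
      I ⊆ C ∧ IsClosed I ∧
      (0 : lp (fun _ : M => ℂ) 2 →L[ℂ] lp (fun _ : M => ℂ) 2) ∈ I ∧
      (∀ x ∈ I, ∀ y ∈ I, x + y ∈ I) ∧
      (∀ (c : ℂ), ∀ x ∈ I, c • x ∈ I) ∧
      (∀ a ∈ C, ∀ x ∈ I, a * x ∈ I ∧ x * a ∈ I) ∧
      (∀ (m : ℕ), 1 ≤ m → ∀ (X : Set M) (Xi : Fin m → Set M),
        IsConstructible X → (∀ i, IsConstructible (Xi i)) →
        IsFoundation X Xi → P (X \ ⋃ i, Xi i) ∈ I)} := by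
  classical
  intro hmem
  set Jmod := (Submodule.span ℂ (GenSet lam P)).topologicalClosure with hJ
  have hGen : GenSet lam P ⊆
      (StarAlgebra.adjoin ℂ (Set.range lam) :
        Set (lp (fun _ : M => ℂ) 2 →L[ℂ] lp (fun _ : M => ℂ) 2)) := by
    rintro T ⟨u, hu, v, hv, m, X, Xi, hm, hX, hXi, hfound, rfl⟩
    exact mul_mem (mul_mem (word_mem_adjoin lam hu)
      (P_diff_mem_adjoin lam P hlam hP hX hXi)) (word_mem_adjoin lam hv)
  have hspan : (Submodule.span ℂ (GenSet lam P) :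
      Set (lp (fun _ : M => ℂ) 2 →L[ℂ] lp (fun _ : M => ℂ) 2)) ⊆
      (StarAlgebra.adjoin ℂ (Set.range lam) :
        Set (lp (fun _ : M => ℂ) 2 →L[ℂ] lp (fun _ : M => ℂ) 2)) := by
    intro x hx
    have hle : Submodule.span ℂ (GenSet lam P) ≤
        Subalgebra.toSubmodule (StarAlgebra.adjoin ℂ (Set.range lam)).toSubalgebra :=
      Submodule.span_le.mpr hGen
    exact hle hx
  have hJset : (Jmod : Set (lp (fun _ : M => ℂ) 2 →L[ℂ] lp (fun _ : M => ℂ) 2)) =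
      closure (Submodule.span ℂ (GenSet lam P) :
        Set (lp (fun _ : M => ℂ) 2 →L[ℂ] lp (fun _ : M => ℂ) 2)) :=
    Submodule.topologicalClosure_coe _
  have hPA : P A ∈ (Jmod : Set (lp (fun _ : M => ℂ) 2 →L[ℂ] lp (fun _ : M => ℂ) 2)) := by
    refine hmem _ ?_
    refine ⟨?_, ?_, ?_, ?_, ?_, ?_, ?_⟩
    · -- ⊆ C
      rw [hJset, hC]
      exact closure_mono hspan
    · rw [hJset]
      exact isClosed_closure
    · exact zero_mem Jmod
    · exact fun x hx y hy => add_mem hx hy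
    · exact fun c x hx => Submodule.smul_mem _ _ hx
    · -- two-sided ideal
      intro a haC x hxI
      have ha' : a ∈ closure
          (StarAlgebra.adjoin ℂ (Set.range lam) :
            Set (lp (fun _ : M => ℂ) 2 →L[ℂ] lp (fun _ : M => ℂ) 2)) := by
        rw [← hC]; exact haC
      have hx' : x ∈ closure (Submodule.span ℂ (GenSet lam P) :
          Set (lp (fun _ : M => ℂ) 2 →L[ℂ] lp (fun _ : M => ℂ) 2)) := by
        rw [← hJset]; exact hxI
      constructor
      · show a * x ∈ (Jmod : Set (lp (fun _ : M => ℂ) 2 →L[ℂ] lp (fun _ : M => ℂ) 2))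
        rw [hJset]
        refine map_mem_closure₂ continuous_mul ha' hx' ?_
        intro a' ha'' b hb
        exact span_mul_left lam P (adjoin_subset_span lam ha'') hb
      · show x * a ∈ (Jmod : Set (lp (fun _ : M => ℂ) 2 →L[ℂ] lp (fun _ : M => ℂ) 2))
        rw [hJset]
        refine map_mem_closure₂ continuous_mul hx' ha' ?_
        intro b hb a' ha''
        exact span_mul_right lam P (adjoin_subset_span lam ha'') hb
    · -- foundation projections
      intro m hm X Xi hX hXi hfound
      refine Submodule.le_topologicalClosure _ (Submodule.subset_span ?_)
      exact ⟨1, one_mem _, 1, one_mem _, m, X, Xi, hm, hX, hXi, hfound,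
        by rw [one_mul, mul_one]⟩
  rw [hJset] at hPA
  obtain ⟨z, hz, hdist⟩ := Metric.mem_closure_iff.mp hPA 1 one_pos
  obtain ⟨Y', hY'c, ⟨s, hs⟩, hsub', hval⟩ := span_kills lam P hlam hP hz A hA hAne
  have h1 : (P A - z) (dl s) = dl s := by
    rw [ContinuousLinearMap.sub_apply, hval s hs, sub_zero, P_dl lam P hlam hP,
      if_pos (hsub' hs)]
  have h3 : ‖(P A - z) (dl s)‖ ≤ ‖P A - z‖ * ‖dl s‖ :=
    ContinuousLinearMap.le_opNorm _ _
  rw [h1, norm_dl, mul_one] at h3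
  have h4 : dist (P A) z = ‖P A - z‖ := dist_eq_norm _ _
  rw [h4] at hdist
  linarith

end SgC
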